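/- arXiv:2506.22264 — 7 statements merged into one kernel-verified Lean document; each statement's English description precedes it below -/
import Mathlib

section
/- Let K be an algebraically closed field of characteristic zero, let n be a natural number, let P be a nonzero polynomial in the multivariate polynomial ring K[X₁,…,Xₙ], and let d₁,…,dₙ be positive integers. Then there exists a nonzero polynomial Q ∈ K[X₁,…,Xₙ] such that P divides the polynomial obtained from Q by substituting Xᵢ ↦ Xᵢ^{dᵢ} for each i (namely one may take the substituted polynomial to be ∏ P(ζ₁X₁,…,ζₙXₙ), the product over all tuples (ζ₁,…,ζₙ) with ζᵢ^{dᵢ} = 1). -/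
open MvPolynomial

lemma monic_divX_aux {A : Type*} [CommRing A] {p : Polynomial A} (hp : p.Monic)
    (h1 : 1 ≤ p.natDegree) : p.divX.Monic := by
  unfold Polynomial.Monic Polynomial.leadingCoeff
  rw [Polynomial.natDegree_divX_eq_natDegree_tsub_one, Polynomial.coeff_divX,
    Nat.sub_add_cancel h1]
  exact hp

lemma key_aux {A S : Type*} [CommRing A] [CommRing S] [IsDomain S] [Algebra A S]
    (hinj : Function.Injective (algebraMap A S)) {x : S} (hx : x ≠ 0)
    (p : Polynomial A) (hp : p.Monic) (h0 : Polynomial.aeval x p = 0) :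
    ∃ a : A, algebraMap A S a ≠ 0 ∧ x ∣ algebraMap A S a := by
  suffices H : ∀ m, ∀ p : Polynomial A, p.Monic → Polynomial.aeval x p = 0 →
      p.natDegree = m → ∃ a : A, algebraMap A S a ≠ 0 ∧ x ∣ algebraMap A S a from
    H p.natDegree p hp h0 rfl
  clear hp h0 p
  intro m
  induction m using Nat.strong_induction_on with
  | _ m ih =>
  intro p hp h0 hn
  have hkey : Polynomial.aeval x p.divX * x + algebraMap A S (p.coeff 0) = 0 := by
    have h0' := h0
    rw [← Polynomial.divX_mul_X_add p] at h0'
    simpa using h0'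
  by_cases hc : p.coeff 0 = 0
  · -- factor out x
    have h1 : 1 ≤ p.natDegree := by
      by_contra h
      have : p.natDegree = 0 := by omega
      have := hp.natDegree_eq_zero.mp this
      rw [this] at hc
      simp only [Polynomial.coeff_one_zero] at hc
      exact one_ne_zero (show (1 : S) = 0 by rw [← map_one (algebraMap A S), hc, map_zero])
    have hdiv0 : Polynomial.aeval x p.divX * x = 0 := by
      rwa [hc, map_zero, add_zero] at hkey
    have : Polynomial.aeval x p.divX = 0 := by
      rcases mul_eq_zero.mp hdiv0 with h | h
      · exact h
      · exact absurd h hx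
    exact ih p.divX.natDegree
      (by rw [Polynomial.natDegree_divX_eq_natDegree_tsub_one, hn]; omega)
      p.divX (monic_divX_aux hp h1) this rfl
  · refine ⟨p.coeff 0, fun h => hc (hinj (by simpa using h)), ?_⟩
    refine ⟨-(Polynomial.aeval x p.divX), ?_⟩
    have : algebraMap A S (p.coeff 0) = -(Polynomial.aeval x p.divX * x) := by
      linear_combination hkey
    rw [this]; ring

/-- Multivariate form of Lemma `divis`: for a nonzero `P ∈ K[X₁,…,Xₙ]` and
positive integers `d₁,…,dₙ`, there is a nonzero `Q` with
`P ∣ Q(X₁^{d₁},…,Xₙ^{dₙ})`. -/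
theorem stmt_2 (K : Type*) [Field K] [IsAlgClosed K] [CharZero K]
    (n : ℕ) (P : MvPolynomial (Fin n) K) (hP : P ≠ 0)
    (d : Fin n → ℕ) (hd : ∀ i, 0 < d i) :
    ∃ Q : MvPolynomial (Fin n) K, Q ≠ 0 ∧
      P ∣ MvPolynomial.aeval (fun i => (X i : MvPolynomial (Fin n) K) ^ d i) Q := by
  set φ : MvPolynomial (Fin n) K →ₐ[K] MvPolynomial (Fin n) K :=
    MvPolynomial.aeval (fun i => (X i : MvPolynomial (Fin n) K) ^ d i) with hφ
  set A : Subalgebra K (MvPolynomial (Fin n) K) := φ.range with hA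
  have hXint : ∀ i : Fin n, IsIntegral A (X i : MvPolynomial (Fin n) K) := by
    intro i
    refine ⟨Polynomial.X ^ d i - Polynomial.C ⟨(X i : MvPolynomial (Fin n) K) ^ d i,
      ⟨X i, by simp [hφ]⟩⟩, Polynomial.monic_X_pow_sub_C _ (hd i).ne', ?_⟩
    simp only [Polynomial.eval₂_sub, Polynomial.eval₂_X_pow, Polynomial.eval₂_C]
    exact sub_eq_zero.mpr rfl
  have hint : ∀ p : MvPolynomial (Fin n) K, IsIntegral A p := by
    intro p
    induction p using MvPolynomial.induction_on with
    | C a =>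
      have hmem : (C a : MvPolynomial (Fin n) K) ∈ A := ⟨C a, by simp [hφ]⟩
      have : (C a : MvPolynomial (Fin n) K) = algebraMap A _ ⟨C a, hmem⟩ := rfl
      rw [this]; exact isIntegral_algebraMap
    | add p q hp hq => exact hp.add hq
    | mul_X p i hp => exact hp.mul (hXint i)
  obtain ⟨p, hpmonic, hp0⟩ := hint P
  have hinj : Function.Injective (algebraMap A (MvPolynomial (Fin n) K)) :=
    fun a b h => Subtype.ext h
  obtain ⟨a, ha0, hdvd⟩ := key_aux hinj hP p hpmonic hp0
  obtain ⟨Q, hQ⟩ := a.2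
  refine ⟨Q, ?_, ?_⟩
  · intro h
    apply ha0
    have : algebraMap A (MvPolynomial (Fin n) K) a = (a : MvPolynomial (Fin n) K) := rfl
    rw [this, ← hQ, h, map_zero]
  · have : algebraMap A (MvPolynomial (Fin n) K) a = φ Q := hQ.symm
    rwa [this] at hdvd
end

section
/- Let K be an algebraically closed field, and let s, a, b ∈ K with s ≠ 0. Then there exists a 4×4 matrix M over K such that MᵀJM = s·J and the characteristic polynomial of M equals X⁴ + a·X³ + b·X² + a·s·X + s². (Any such M is automatically invertible, since its determinant is s².) -/
open Polynomial Matrix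

set_option maxHeartbeats 1600000 in
private lemma my_det_aux {K : Type*} [Field K] (s α β : K) :
    (!![(X : K[X]), 0, 0, C s; 0, X, C s, 0; 0, -1, X + C β, 0; -1, 0, 0, X + C α]).det
      = (X ^ 2 + C α * X + C s) * (X ^ 2 + C β * X + C s) := by
  rw [Matrix.det_succ_row_zero]
  simp [Fin.sum_univ_succ, Matrix.det_fin_three, show (Fin.castSucc 2 : Fin 4) = 2 from rfl,
    show (Fin.succAbove (3 : Fin 4) (2 : Fin 3)) = 2 from rfl]
  ring

/-- Over an algebraically closed field, every polynomial
`X⁴ + aX³ + bX² + asX + s²` with `s ≠ 0` is the characteristic polynomial of a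
symplectic similitude matrix with similitude factor `s`. -/
theorem stmt_4 (K : Type*) [Field K] [IsAlgClosed K] (s a b : K) (hs : s ≠ 0) :
    let J : Matrix (Fin 4) (Fin 4) K :=
      !![0, 0, 0, 1; 0, 0, 1, 0; 0, -1, 0, 0; -1, 0, 0, 0]
    ∃ M : Matrix (Fin 4) (Fin 4) K,
      Mᵀ * J * M = s • J ∧
        M.charpoly = X ^ 4 + C a * X ^ 3 + C b * X ^ 2 + C (a * s) * X + C (s ^ 2) := by
  intro J
  -- choose α a root of t² - a t + (b - 2 s)
  obtain ⟨α, hα⟩ := IsAlgClosed.exists_root (X ^ 2 + C (-a) * X + C (b - 2 * s))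
    (by
      rw [show (X ^ 2 + C (-a) * X + C (b - 2 * s) : K[X])
          = C 1 * X ^ 2 + C (-a) * X + C (b - 2 * s) by rw [Polynomial.C_1, one_mul]]
      rw [Polynomial.degree_quadratic one_ne_zero]
      decide)
  have hroot : α ^ 2 + (-a) * α + (b - 2 * s) = 0 := by
    simpa [IsRoot] using hα
  set β := a - α with hβ
  have hb : b = α * β + 2 * s := by rw [hβ]; linear_combination hroot
  have ha : a = α + β := by rw [hβ]; ring
  set M : Matrix (Fin 4) (Fin 4) K := !![0, 0, 0, -s; 0, 0, -s, 0; 0, 1, -β, 0; 1, 0, 0, -α]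
    with hM
  have hT : Mᵀ = !![0, 0, 0, 1; 0, 0, 1, 0; 0, -s, -β, 0; -s, 0, 0, -α] := by
    rw [hM]; ext i j; fin_cases i <;> fin_cases j <;> rfl
  refine ⟨M, ?_, ?_⟩
  · rw [hT]
    ext i j
    fin_cases i <;> fin_cases j <;>
      simp [J, hM, Matrix.mul_apply, Fin.sum_univ_four] <;>
      first
        | ring1
        | exact Or.inr rfl
        | (show -(α * s) + s * α = s * 0; ring1)
  · have hc : charmatrix M =
        !![X, 0, 0, C s; 0, X, C s, 0; 0, -1, X + C β, 0; -1, 0, 0, X + C α] := by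
      ext i j
      fin_cases i <;> fin_cases j <;>
        simp [hM, charmatrix_apply, Matrix.one_apply] <;> ring
    rw [Matrix.charpoly, hc, my_det_aux, hb, ha]
    simp only [_root_.map_add, _root_.map_mul, map_pow, map_ofNat]
    ring
end

section
/- Let K be a field, let m and n be coprime positive integers, and let c ∈ K be nonzero. Then the polynomial X^m − c·Y^n is irreducible in the polynomial ring K[X, Y]. -/
open MvPolynomial

lemma intDegree_pow_aux {K : Type*} [Field K] (b : RatFunc K) (hb : b ≠ 0) (k : ℕ) :
    (b ^ k).intDegree = k * b.intDegree := by
  induction k with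
  | zero => simp
  | succ k ih =>
    rw [pow_succ, RatFunc.intDegree_mul (pow_ne_zero _ hb) hb, ih]
    push_cast; ring

open Polynomial in
lemma core_aux (K : Type*) [Field K] (m n : ℕ) (hm : Odd m) (hn : 0 < n)
    (hmn : Nat.Coprime m n) (c : K) (hc : c ≠ 0) :
    Irreducible (Polynomial.X ^ m - Polynomial.C (Polynomial.C c * Polynomial.X ^ n) :
      Polynomial (Polynomial K)) := by
  have hm0 : m ≠ 0 := by rintro rfl; simp at hm
  have hmonic : (Polynomial.X ^ m - Polynomial.C (Polynomial.C c * Polynomial.X ^ n) :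
      Polynomial (Polynomial K)).Monic := monic_X_pow_sub_C _ hm0
  rw [hmonic.irreducible_iff_irreducible_map_fraction_map (K := RatFunc K)]
  rw [Polynomial.map_sub, Polynomial.map_pow, Polynomial.map_X, Polynomial.map_C]
  apply X_pow_sub_C_irreducible_of_odd hm
  intro p hp hpm b hb
  have hane : (Polynomial.C c * Polynomial.X ^ n : Polynomial K) ≠ 0 := by
    exact mul_ne_zero (by simpa using hc) (pow_ne_zero _ Polynomial.X_ne_zero)
  have ha : (algebraMap (Polynomial K) (RatFunc K)) (Polynomial.C c * Polynomial.X ^ n) ≠ 0 := by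
    simp only [map_mul, map_pow, ne_eq, mul_eq_zero, pow_eq_zero_iff hn.ne', not_or]
    constructor
    · simpa using hc
    · exact RatFunc.X_ne_zero
  have hb0 : b ≠ 0 := by rintro rfl; rw [zero_pow hp.ne_zero] at hb; exact ha hb.symm
  have hdeg : (p : ℤ) * b.intDegree = n := by
    rw [← intDegree_pow_aux b hb0, hb, RatFunc.intDegree_polynomial,
      Polynomial.natDegree_C_mul hc, Polynomial.natDegree_X_pow]
  have hpn : p ∣ n := by
    have : (p : ℤ) ∣ (n : ℤ) := ⟨b.intDegree, hdeg.symm⟩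
    exact_mod_cast this
  exact hp.ne_one (Nat.eq_one_of_dvd_one (hmn ▸ Nat.dvd_gcd hpm hpn))


noncomputable def eqv_aux (K : Type*) [Field K] :
    MvPolynomial (Fin 2) K ≃ₐ[K] Polynomial (Polynomial K) :=
  (MvPolynomial.finSuccEquiv K 1).trans
    (Polynomial.mapAlgEquiv ((MvPolynomial.finSuccEquiv K 0).trans
      (Polynomial.mapAlgEquiv (MvPolynomial.isEmptyAlgEquiv K (Fin 0)))))

lemma eqv_aux_X0 (K : Type*) [Field K] :
    eqv_aux K (X 0) = (Polynomial.X : Polynomial (Polynomial K)) := by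
  simp only [eqv_aux, AlgEquiv.trans_apply, finSuccEquiv_X_zero,
    Polynomial.coe_mapAlgEquiv, Polynomial.map_X]

lemma eqv_aux_X1 (K : Type*) [Field K] :
    eqv_aux K (X 1) = Polynomial.C (Polynomial.X : Polynomial K) := by
  have h1 : (X 1 : MvPolynomial (Fin 2) K) = X (Fin.succ 0) := rfl
  simp only [eqv_aux, h1, AlgEquiv.trans_apply, finSuccEquiv_X_succ,
    Polynomial.coe_mapAlgEquiv, Polynomial.map_C]
  congr 1
  show ((MvPolynomial.finSuccEquiv K 0).trans
      (Polynomial.mapAlgEquiv (isEmptyAlgEquiv K (Fin 0)))) (X 0) = Polynomial.X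
  rw [AlgEquiv.trans_apply, finSuccEquiv_X_zero]
  simp only [Polynomial.coe_mapAlgEquiv, Polynomial.map_X]

lemma eqv_aux_C (K : Type*) [Field K] (c : K) :
    eqv_aux K (C c) = Polynomial.C (Polynomial.C c) := by
  have : (C c : MvPolynomial (Fin 2) K) = algebraMap K _ c := rfl
  rw [this, AlgEquiv.commutes]
  rfl

lemma aux_odd (K : Type*) [Field K] (m n : ℕ) (hm : Odd m) (hn : 0 < n)
    (hmn : Nat.Coprime m n) (c : K) (hc : c ≠ 0) :
    Irreducible ((X 0 : MvPolynomial (Fin 2) K) ^ m - C c * X 1 ^ n) := by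
  rw [← MulEquiv.irreducible_iff (eqv_aux K).toRingEquiv]
  have h1 : (X 1 : MvPolynomial (Fin 2) K) = X (Fin.succ 0) := rfl
  have himg : (eqv_aux K) ((X 0 : MvPolynomial (Fin 2) K) ^ m - C c * X 1 ^ n)
      = Polynomial.X ^ m - Polynomial.C (Polynomial.C c * Polynomial.X ^ n) := by
    rw [map_sub, map_pow, map_mul, map_pow, eqv_aux_X0, eqv_aux_X1, eqv_aux_C,
      ← Polynomial.C_pow, ← Polynomial.C_mul]
  show Irreducible ((eqv_aux K) ((X 0 : MvPolynomial (Fin 2) K) ^ m - C c * X 1 ^ n))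
  rw [himg]
  exact core_aux K m n hm hn hmn c hc

/-- For coprime positive integers `m, n` and a nonzero constant `c`, the
polynomial `X^m - c·Y^n` is irreducible in `K[X, Y]`. -/
theorem stmt_5 (K : Type*) [Field K] (m n : ℕ) (hm : 0 < m) (hn : 0 < n)
    (hmn : Nat.Coprime m n) (c : K) (hc : c ≠ 0) :
    Irreducible ((X 0 : MvPolynomial (Fin 2) K) ^ m - C c * X 1 ^ n) := by
  rcases Nat.even_or_odd m with hme | hmo
  · -- m even, so n is odd
    have hno : Odd n := by
      rcases Nat.even_or_odd n with hne | h
      · exfalso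
        have h2 : 2 ∣ Nat.gcd m n := Nat.dvd_gcd hme.two_dvd hne.two_dvd
        rw [hmn] at h2
        omega
      · exact h
    have key := aux_odd K n m hno hm hmn.symm c⁻¹ (inv_ne_zero hc)
    -- swap the variables
    have key2 : Irreducible ((X 1 : MvPolynomial (Fin 2) K) ^ n - C c⁻¹ * X 0 ^ m) := by
      have := (MulEquiv.irreducible_iff
        ((renameEquiv K (Equiv.swap (0 : Fin 2) 1)).toRingEquiv)).mpr key
      have himg : (renameEquiv K (Equiv.swap (0 : Fin 2) 1))
          ((X 0 : MvPolynomial (Fin 2) K) ^ n - C c⁻¹ * X 1 ^ m)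
          = (X 1 : MvPolynomial (Fin 2) K) ^ n - C c⁻¹ * X 0 ^ m := by
        simp [renameEquiv_apply, map_sub, map_pow, map_mul, rename_X, rename_C,
          Equiv.swap_apply_left, Equiv.swap_apply_right]
      rwa [show ((renameEquiv K (Equiv.swap (0 : Fin 2) 1)).toRingEquiv)
          ((X 0 : MvPolynomial (Fin 2) K) ^ n - C c⁻¹ * X 1 ^ m)
          = (renameEquiv K (Equiv.swap (0 : Fin 2) 1))
            ((X 0 : MvPolynomial (Fin 2) K) ^ n - C c⁻¹ * X 1 ^ m) from rfl, himg] at this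
    -- multiply by the unit -C c
    have hu : IsUnit (-(C c) : MvPolynomial (Fin 2) K) := (hc.isUnit.map MvPolynomial.C).neg
    have hassoc : Associated ((X 1 : MvPolynomial (Fin 2) K) ^ n - C c⁻¹ * X 0 ^ m)
        ((X 0 : MvPolynomial (Fin 2) K) ^ m - C c * X 1 ^ n) := by
      refine ⟨hu.unit, ?_⟩
      rw [IsUnit.unit_spec]
      have h1 : (C c : MvPolynomial (Fin 2) K) * C c⁻¹ = 1 := by
        rw [← C_mul, mul_inv_cancel₀ hc, C_1]
      linear_combination (X 0 ^ m : MvPolynomial (Fin 2) K) * h1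
    exact hassoc.irreducible key2
  · exact aux_odd K m n hmo hn hmn c hc
end

section
/- Let K be an algebraically closed field of characteristic zero, let κ and κ' be positive integers, and set d = gcd(κ, κ'). Let ζ, ζ' ∈ K satisfy ζ^d = 1 and (ζ')^{κ/d} = ζ. Let P be a polynomial in six variables S, S', A, B, A', B' over K, and suppose that the polynomial S^{κ/d} − ζ·(S')^{κ'/d} does not divide P in K[S, S', A, B, A', B']. Then there exist t, α, β, α', β' ∈ K with t ≠ 0 such that P(ζ'·t^{κ'}, t^κ, α, β, α', β') ≠ 0. -/
open MvPolynomial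

private lemma arith_aux {d a b : ℕ} (hd : 0 < d) (ha : 0 < a) (hab : Nat.Coprime a b)
    {i i' j j' : ℕ} (hi : i < a) (hi' : i' < a)
    (h : d * b * i + d * a * j = d * b * i' + d * a * j') : i = i' ∧ j = j' := by
  have h1 : b * i + a * j = b * i' + a * j' := by
    have h' : d * (b * i + a * j) = d * (b * i' + a * j') := by ring_nf; ring_nf at h; linarith
    exact Nat.eq_of_mul_eq_mul_left hd h'
  have h2 : (b * i) % a = (b * i') % a := by
    have := congrArg (· % a) h1
    simpa [Nat.add_mul_mod_self_left] using this
  have h3 : i % a = i' % a :=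
    Nat.ModEq.cancel_left_of_coprime (by simpa [Nat.coprime_comm] using hab) h2
  have hii : i = i' := by rwa [Nat.mod_eq_of_lt hi, Nat.mod_eq_of_lt hi'] at h3
  subst hii
  exact ⟨rfl, Nat.eq_of_mul_eq_mul_left ha (by omega)⟩

/-- Algebraic core of the non-vanishing lemma: if `P ∈ K[S,S',A,B,A',B']` is not
divisible by `S^{κ/d} − ζ·(S')^{κ'/d}` (where `d = gcd(κ,κ')`, `ζ^d = 1`,
`(ζ')^{κ/d} = ζ`), then there exist `t ≠ 0` and `α, β, α', β'` with
`P(ζ'·t^{κ'}, t^κ, α, β, α', β') ≠ 0`. -/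
theorem stmt_10 (K : Type*) [Field K] [IsAlgClosed K] [CharZero K]
    (κ κ' : ℕ) (hκ : 0 < κ) (hκ' : 0 < κ') (d : ℕ) (hd : d = Nat.gcd κ κ')
    (ζ ζ' : K) (hζ : ζ ^ d = 1) (hζ' : ζ' ^ (κ / d) = ζ)
    (P : MvPolynomial (Fin 6) K)
    (hP : ¬ ((X 0 : MvPolynomial (Fin 6) K) ^ (κ / d) - C ζ * X 1 ^ (κ' / d)) ∣ P) :
    ∃ t α β α' β' : K, t ≠ 0 ∧
      MvPolynomial.eval ![ζ' * t ^ κ', t ^ κ, α, β, α', β'] P ≠ 0 := by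
  set a := κ / d with ha_def
  set b := κ' / d with hb_def
  have hd0 : 0 < d := by rw [hd]; exact Nat.gcd_pos_of_pos_left _ hκ
  have hdκ : d ∣ κ := by rw [hd]; exact Nat.gcd_dvd_left κ κ'
  have hdκ' : d ∣ κ' := by rw [hd]; exact Nat.gcd_dvd_right κ κ'
  have hκa : d * a = κ := Nat.mul_div_cancel' hdκ
  have hκ'b : d * b = κ' := Nat.mul_div_cancel' hdκ'
  have ha0 : 0 < a := Nat.div_pos (Nat.le_of_dvd hκ hdκ) hd0
  have hb0 : 0 < b := Nat.div_pos (Nat.le_of_dvd hκ' hdκ') hd0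
  have hab : Nat.Coprime a b := by
    rw [ha_def, hb_def, hd]
    exact Nat.coprime_div_gcd_div_gcd (Nat.gcd_pos_of_pos_left _ hκ)
  have hζ0 : ζ ≠ 0 := by
    intro h; rw [h, zero_pow hd0.ne'] at hζ; exact zero_ne_one hζ
  have hζ'0 : ζ' ≠ 0 := by
    intro h; apply hζ0; rw [← hζ', h, zero_pow ha0.ne']
  -- the substitution map
  set f : Fin 6 → MvPolynomial (Fin 5) K :=
    ![C ζ' * X 0 ^ κ', X 0 ^ κ, X 1, X 2, X 3, X 4] with hf
  -- image of a monomial exponent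
  set g : (Fin 6 →₀ ℕ) → (Fin 5 →₀ ℕ) := fun m =>
    Finsupp.single 0 (κ' * m 0) + Finsupp.single 0 (κ * m 1) + Finsupp.single 1 (m 2)
      + Finsupp.single 2 (m 3) + Finsupp.single 3 (m 4) + Finsupp.single 4 (m 5) with hg
  have hmono : ∀ (m : Fin 6 →₀ ℕ) (c : K),
      aeval f (monomial m c) = monomial (g m) (ζ' ^ (m 0) * c) := by
    intro m c
    rw [aeval_monomial, Finsupp.prod_fintype _ _ (fun i => pow_zero _), Fin.prod_univ_six]
    rw [show f 0 = C ζ' * X 0 ^ κ' from rfl, show f 1 = X 0 ^ κ from rfl,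
      show f 2 = X 1 from rfl, show f 3 = X 2 from rfl, show f 4 = X 3 from rfl,
      show f 5 = X 4 from rfl]
    rw [mul_pow, ← C_pow, ← pow_mul, ← pow_mul, MvPolynomial.algebraMap_eq]
    simp only [X_pow_eq_monomial, monomial_mul, C_mul_monomial, mul_one, one_mul]
    simp only [hg]
    congr 1
    ring
  have hginj : ∀ m m' : Fin 6 →₀ ℕ, m 0 < a → m' 0 < a → g m = g m' → m = m' := by
    have hg0 : ∀ m : Fin 6 →₀ ℕ, g m 0 = κ' * m 0 + κ * m 1 := by intro m; simp [hg]
    have hg1 : ∀ m : Fin 6 →₀ ℕ, g m 1 = m 2 := by intro m; simp [hg]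
    have hg2 : ∀ m : Fin 6 →₀ ℕ, g m 2 = m 3 := by intro m; simp [hg]
    have hg3 : ∀ m : Fin 6 →₀ ℕ, g m 3 = m 4 := by intro m; simp [hg]
    have hg4 : ∀ m : Fin 6 →₀ ℕ, g m 4 = m 5 := by intro m; simp [hg]
    intro m m' hm hm' hgg
    have e0 : κ' * m 0 + κ * m 1 = κ' * m' 0 + κ * m' 1 := by
      rw [← hg0, ← hg0, hgg]
    have e1 : m 2 = m' 2 := by rw [← hg1, ← hg1, hgg]
    have e2 : m 3 = m' 3 := by rw [← hg2, ← hg2, hgg]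
    have e3 : m 4 = m' 4 := by rw [← hg3, ← hg3, hgg]
    have e4 : m 5 = m' 5 := by rw [← hg4, ← hg4, hgg]
    have e0' : d * b * m 0 + d * a * m 1 = d * b * m' 0 + d * a * m' 1 := by
      rw [hκa, hκ'b]; omega
    obtain ⟨q0, q1⟩ := arith_aux hd0 ha0 hab hm hm' e0'
    ext i
    fin_cases i <;> assumption
  -- division with remainder by `Q`, which is monic in the first variable
  set Q : MvPolynomial (Fin 6) K := X 0 ^ a - C ζ * X 1 ^ b with hQ
  set e := MvPolynomial.finSuccEquiv K 5 with he_def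
  have heC : e (C ζ) = Polynomial.C (C ζ) := by
    simp [he_def, MvPolynomial.finSuccEquiv_apply]
  have heQ : e Q = Polynomial.X ^ a - Polynomial.C (C ζ * X 0 ^ b) := by
    have h1 : (1 : Fin 6) = Fin.succ 0 := rfl
    rw [hQ, map_sub, map_pow, map_mul, map_pow, h1]
    rw [he_def, MvPolynomial.finSuccEquiv_X_zero, MvPolynomial.finSuccEquiv_X_succ, ← he_def]
    rw [heC, ← Polynomial.C_pow, ← map_mul]
  have hmonic : (e Q).Monic := by
    rw [heQ]; exact Polynomial.monic_X_pow_sub_C _ ha0.ne'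
  have hdegQ : (e Q).natDegree = a := by
    rw [heQ, Polynomial.natDegree_X_pow_sub_C]
  set R : MvPolynomial (Fin 6) K := e.symm (e P %ₘ e Q) with hR
  have heR : e R = e P %ₘ e Q := by rw [hR, AlgEquiv.apply_symm_apply]
  have hRne : R ≠ 0 := by
    intro h
    apply hP
    have h0 : e P %ₘ e Q = 0 := by rw [← heR, h, map_zero]
    obtain ⟨c, hc⟩ := (Polynomial.modByMonic_eq_zero_iff_dvd hmonic).mp h0
    exact ⟨e.symm c, e.injective (by rw [map_mul, AlgEquiv.apply_symm_apply, ← hc])⟩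
  have hmodne : e P %ₘ e Q ≠ 0 := fun h => hRne (by rw [hR, h, map_zero])
  have hdeg : ∀ m ∈ R.support, m 0 < a := by
    have h1 : degreeOf 0 R < a := by
      rw [← MvPolynomial.natDegree_finSuccEquiv, ← he_def, heR, ← hdegQ]
      exact Polynomial.natDegree_lt_natDegree hmodne (Polynomial.degree_modByMonic_lt _ hmonic)
    exact fun m hm => lt_of_le_of_lt (MvPolynomial.monomial_le_degreeOf 0 hm) h1
  have hφQ : aeval f Q = 0 := by
    have hexp : κ' * a = κ * b := by rw [← hκa, ← hκ'b]; ring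
    rw [hQ, map_sub, map_pow, map_mul, map_pow, aeval_X, aeval_X, aeval_C,
      MvPolynomial.algebraMap_eq]
    rw [show f 0 = C ζ' * X 0 ^ κ' from rfl, show f 1 = X 0 ^ κ from rfl]
    rw [mul_pow, ← C_pow, hζ', ← pow_mul, ← pow_mul, hexp, sub_self]
  have hφPR : aeval f P = aeval f R := by
    have hkey : P = Q * e.symm (e P /ₘ e Q) + R := by
      apply e.injective
      rw [map_add, map_mul, AlgEquiv.apply_symm_apply, heR]
      have hmd := Polynomial.modByMonic_add_div (e P) (e Q)
      rw [add_comm] at hmd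
      exact hmd.symm
    rw [hkey, map_add, map_mul, hφQ, zero_mul, zero_add]
  have hφRne : aeval f R ≠ 0 := by
    have hsum : aeval f R = ∑ m ∈ R.support, monomial (g m) (ζ' ^ (m 0) * coeff m R) := by
      conv_lhs => rw [← support_sum_monomial_coeff R]
      rw [map_sum]
      exact Finset.sum_congr rfl fun m _ => hmono m _
    obtain ⟨m₀, hm₀⟩ := support_nonempty.mpr hRne
    have hc : coeff (g m₀) (aeval f R) = ζ' ^ (m₀ 0) * coeff m₀ R := by
      rw [hsum, MvPolynomial.coeff_sum]
      rw [Finset.sum_eq_single m₀]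
      · rw [coeff_monomial, if_pos rfl]
      · intro m hm hne
        rw [coeff_monomial, if_neg]
        intro hEq
        exact hne (hginj m m₀ (hdeg m hm) (hdeg m₀ hm₀) hEq)
      · intro h; exact absurd hm₀ h
    intro h0
    rw [h0, coeff_zero] at hc
    rcases mul_eq_zero.mp hc.symm with h | h
    · exact pow_ne_zero _ hζ'0 h
    · exact mem_support_iff.mp hm₀ h
  have heval : ∀ (x : Fin 5 → K) (p : MvPolynomial (Fin 6) K),
      eval x (aeval f p) = eval (fun i => eval x (f i)) p := by
    intro x p
    induction p using MvPolynomial.induction_on with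
    | C c => simp only [aeval_C, MvPolynomial.algebraMap_eq, eval_C]
    | add p q hp hq => simp only [map_add, hp, hq]
    | mul_X p i hp => simp only [map_mul, aeval_X, eval_X, hp]
  by_contra hcon
  push_neg at hcon
  have hzero : (X 0 : MvPolynomial (Fin 5) K) * aeval f P = 0 := by
    apply MvPolynomial.funext
    intro x
    simp only [map_zero, map_mul, eval_X]
    rcases eq_or_ne (x 0) 0 with h0 | h0
    · rw [h0, zero_mul]
    · have hev : eval x (aeval f P) = eval ![ζ' * (x 0) ^ κ', (x 0) ^ κ, x 1, x 2, x 3, x 4] P := by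
        have hvec : (fun i => eval x (f i)) = ![ζ' * (x 0) ^ κ', (x 0) ^ κ, x 1, x 2, x 3, x 4] := by
          funext i
          fin_cases i <;>
            simp [hf]
        rw [heval x P, hvec]
      rw [hev, hcon (x 0) (x 1) (x 2) (x 3) (x 4) h0, mul_zero]
  have hφP0 : aeval f P = 0 := by
    rcases mul_eq_zero.mp hzero with h | h
    · exact absurd h (MvPolynomial.X_ne_zero 0)
    · exact h
  exact hφRne (hφPR ▸ hφP0)
end

section
/- Let R be a commutative ring and let c be a unit of R. Let σ be an R-algebra homomorphism from the Laurent polynomial ring R[T, T⁻¹] to itself satisfying σ(T) = c·T⁻¹. Then every f ∈ R[T, T⁻¹] with σ(f) = f belongs to the R-subalgebra of R[T, T⁻¹] generated by the single element T + c·T⁻¹. -/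
open LaurentPolynomial

section Stmt11Aux

variable {R : Type*} [CommRing R] (c : Rˣ)
  (σ : R[T;T⁻¹] →ₐ[R] R[T;T⁻¹]) (hσ : σ (T 1) = C (c : R) * T (-1))

private lemma stmt11_e1 (m : ℕ) : (T (m:ℤ) : R[T;T⁻¹]) = T 1 ^ m := by rw [T_pow, mul_one]

private lemma stmt11_e2 (m : ℕ) : (T (-(m:ℤ)) : R[T;T⁻¹]) = T (-1) ^ m := by
  rw [T_pow]; norm_num

private lemma stmt11_TT : (T 1 * T (-1) : R[T;T⁻¹]) = 1 := by rw [← T_add]; norm_num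

private lemma stmt11_s_mem (k : ℕ) :
    (T (k:ℤ) + C ((c:R)^k) * T (-(k:ℤ)) : R[T;T⁻¹]) ∈
      Algebra.adjoin R {(T 1 + C (c:R) * T (-1) : R[T;T⁻¹])} := by
  set A := Algebra.adjoin R {(T 1 + C (c:R) * T (-1) : R[T;T⁻¹])} with hA
  set P : ℕ → Prop := fun k =>
    (T (k:ℤ) + C ((c:R)^k) * T (-(k:ℤ)) : R[T;T⁻¹]) ∈ A with hP
  have base0 : P 0 := by
    simp only [hP, Nat.cast_zero, neg_zero, T_zero, pow_zero, map_one, one_mul]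
    exact add_mem (one_mem _) (one_mem _)
  have base1 : P 1 := by
    simp only [hP, Nat.cast_one, pow_one]
    exact Algebra.subset_adjoin rfl
  have main : ∀ m : ℕ, P m ∧ P (m+1) := by
    intro m
    induction m with
    | zero => exact ⟨base0, base1⟩
    | succ m ihm =>
      refine ⟨ihm.2, ?_⟩
      have key : (T ((m:ℤ)+2) + C ((c:R)^(m+2)) * T (-((m:ℤ)+2)) : R[T;T⁻¹]) =
          (T 1 + C (c:R) * T (-1)) * (T ((m:ℤ)+1) + C ((c:R)^(m+1)) * T (-((m:ℤ)+1)))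
            - C (c:R) * (T (m:ℤ) + C ((c:R)^m) * T (-(m:ℤ))) := by
        have c2 : ((m:ℤ)+2) = ((m+2 : ℕ) : ℤ) := by push_cast; ring
        have c1 : ((m:ℤ)+1) = ((m+1 : ℕ) : ℤ) := by push_cast; ring
        rw [c2, c1, stmt11_e1, stmt11_e1, stmt11_e1, stmt11_e2, stmt11_e2, stmt11_e2,
          map_pow, map_pow, map_pow]
        linear_combination -(C (c:R) * T 1 ^ m + C (c:R) ^ (m+1) * T (-1) ^ m) * stmt11_TT (R := R)
      have c2 : ((m+1+1 : ℕ) : ℤ) = ((m:ℤ)+2) := by push_cast; ring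
      have c1 : ((m+1 : ℕ) : ℤ) = ((m:ℤ)+1) := by push_cast; ring
      show (T ((m+1+1:ℕ):ℤ) + C ((c:R)^(m+1+1)) * T (-((m+1+1:ℕ):ℤ)) : R[T;T⁻¹]) ∈ A
      rw [c2, show (m+1+1 : ℕ) = m+2 from rfl, key, ← c1]
      refine sub_mem (mul_mem (Algebra.subset_adjoin rfl) ?_) (mul_mem ?_ ihm.1)
      · have := ihm.2; rwa [hP] at this
      · rw [C_eq_algebraMap]; exact Subalgebra.algebraMap_mem _ _
  exact (main k).1

include hσ

private lemma stmt11_inv : σ (T (-1)) = C ((c⁻¹:Rˣ):R) * T 1 := by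
  have h1 : σ (T 1) * σ (T (-1)) = 1 := by rw [← map_mul, stmt11_TT, map_one]
  have hU : IsUnit (σ (T 1)) := by
    rw [hσ]
    exact (c.isUnit.map C).mul (isUnit_T (-1))
  have h2 : σ (T 1) * (C ((c⁻¹:Rˣ):R) * T 1) = 1 := by
    rw [hσ, mul_mul_mul_comm, ← map_mul, ← T_add]
    norm_num
  exact hU.mul_left_cancel (h1.trans h2.symm)

private lemma stmt11_pos (m : ℕ) : σ (T (m:ℤ)) = C ((c:R)^m) * T (-(m:ℤ)) := by
  rw [stmt11_e1, map_pow, hσ, mul_pow, ← map_pow, T_pow]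
  norm_num

private lemma stmt11_neg (m : ℕ) : σ (T (-(m:ℤ))) = C (((c⁻¹:Rˣ):R)^m) * T (m:ℤ) := by
  rw [stmt11_e2, map_pow, stmt11_inv c σ hσ, mul_pow, ← map_pow, T_pow, mul_one]

private lemma stmt11_T (m : ℤ) : σ (T m) = C ((c ^ m : Rˣ) : R) * T (-m) := by
  obtain ⟨k, rfl | rfl⟩ := Int.eq_nat_or_neg m
  · rw [stmt11_pos c σ hσ]
    norm_num [zpow_natCast]
  · rw [stmt11_neg c σ hσ, neg_neg]
    rw [zpow_neg, zpow_natCast, ← inv_pow, Units.val_pow_eq_pow_val]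

private lemma stmt11_sigma_s (k : ℕ) :
    σ (T (k:ℤ) + C ((c:R)^k) * T (-(k:ℤ))) = T (k:ℤ) + C ((c:R)^k) * T (-(k:ℤ)) := by
  rw [map_add, map_mul, stmt11_pos c σ hσ, stmt11_neg c σ hσ,
    show σ (C ((c:R)^k)) = C ((c:R)^k) by
      rw [C_eq_algebraMap]; exact σ.commutes _]
  rw [← mul_assoc, ← map_mul]
  have : ((c:R)^k) * (((c⁻¹:Rˣ):R)^k) = 1 := by
    rw [← mul_pow]
    norm_num
  rw [this, map_one, one_mul]
  ring

private lemma stmt11_key (f : R[T;T⁻¹]) (hf : σ f = f) (m : ℤ) :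
    f.coeff (-m) = ((c ^ m : Rˣ) : R) * f.coeff m := by
  have hC : ∀ a : R, σ (C a) = C a := fun a => by
    rw [C_eq_algebraMap]; exact σ.commutes a
  have exp : σ f = Finsupp.sum f.coeff
      (fun n a => (AddMonoidAlgebra.single (-n) (((c ^ n : Rˣ) : R) * a) : R[T;T⁻¹])) := by
    conv_lhs => rw [← AddMonoidAlgebra.sum_coeff_single f]
    rw [map_finsuppSum]
    refine Finsupp.sum_congr fun n _ => ?_
    rw [single_eq_C_mul_T, map_mul, hC, stmt11_T c σ hσ, single_eq_C_mul_T, map_mul]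
    ring
  have exp' : f.coeff = (Finsupp.sum f.coeff
      (fun n a => Finsupp.single (-n) (((c ^ n : Rˣ) : R) * a))) := by
    conv_lhs => rw [← hf, exp]
    simp only [Finsupp.sum, AddMonoidAlgebra.coeff_sum, AddMonoidAlgebra.coeff_single]
  have h1 := DFunLike.congr_fun exp' (-m)
  rw [Finsupp.sum_apply] at h1
  rw [h1]
  have h2 : Finsupp.sum f.coeff
        (fun n a => (Finsupp.single (-n) (((c ^ n : Rˣ) : R) * a) : ℤ →₀ R) (-m))
      = Finsupp.sum f.coeff
        (fun n a => if n = m then ((c ^ n : Rˣ) : R) * a else 0) :=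
    Finsupp.sum_congr fun n _ => by rw [Finsupp.single_apply]; simp [neg_inj]
  rw [h2, Finsupp.sum_ite_eq']
  split_ifs with h
  · rfl
  · rw [Finsupp.notMem_support_iff.mp h, mul_zero]

private lemma stmt11_main : ∀ N : ℕ, ∀ f : R[T;T⁻¹], σ f = f →
    f.coeff.support.card ≤ N →
    f ∈ Algebra.adjoin R {(T 1 + C (c:R) * T (-1) : R[T;T⁻¹])} := by
  intro N
  induction N with
  | zero =>
    intro f _ hcard
    have : f.coeff = 0 :=
      Finsupp.support_eq_empty.mp (Finset.card_eq_zero.mp (le_antisymm hcard (Nat.zero_le _)))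
    have hf0 : f = 0 := AddMonoidAlgebra.coeff_eq_zero.mp this
    rw [hf0]; exact zero_mem _
  | succ N ih =>
    intro f hf hcard
    by_cases hf0 : f = 0
    · rw [hf0]; exact zero_mem _
    have hne : (f.coeff.support).Nonempty := by
      rw [Finsupp.support_nonempty_iff, Ne, AddMonoidAlgebra.coeff_eq_zero]; exact hf0
    set n : ℤ := f.coeff.support.max' hne with hn
    have hmem : n ∈ f.coeff.support := Finset.max'_mem _ _
    have hsym : ∀ m ∈ f.coeff.support, -m ∈ f.coeff.support := by
      intro m hm
      rw [Finsupp.mem_support_iff] at hm ⊢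
      rw [stmt11_key c σ hσ f hf m]
      exact fun h => hm ((Units.mul_right_eq_zero _).mp h)
    have hn0 : 0 ≤ n := by
      have := Finset.le_max' _ _ (hsym n hmem)
      omega
    set k : ℕ := n.toNat with hk
    have hkn : (k : ℤ) = n := Int.toNat_of_nonneg hn0
    set b : R := f.coeff n with hb
    set s : R[T;T⁻¹] := T (k:ℤ) + C ((c:R)^k) * T (-(k:ℤ)) with hs
    by_cases hn' : n = 0
    · have hsub : f.coeff.support ⊆ {0} := by
        intro m hm
        have h1 := Finset.le_max' _ _ hm
        have h2 := Finset.le_max' _ _ (hsym m hm)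
        rw [← hn] at h1 h2
        simp only [Finset.mem_singleton]
        omega
      have : @Eq (ℤ →₀ R) f.coeff (Finsupp.single 0 (f.coeff 0)) :=
        Finsupp.support_subset_singleton.mp hsub
      have hfc : f = C (f.coeff 0) := by
        rw [show (C (f.coeff 0) : R[T;T⁻¹]) = AddMonoidAlgebra.single 0 (f.coeff 0) by
          rw [single_eq_C_mul_T, T_zero, mul_one]]
        exact AddMonoidAlgebra.coeff_injective this
      rw [hfc, C_eq_algebraMap]
      exact Subalgebra.algebraMap_mem _ _
    have hkpos : 0 < k := by omega
    set g : R[T;T⁻¹] := f - C b * s with hg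
    have hσg : σ g = g := by
      rw [hg, map_sub, map_mul, hf, stmt11_sigma_s c σ hσ k, C_eq_algebraMap, σ.commutes b]
    have capp : ∀ (a : R) (j m : ℤ),
        (C a * T j : R[T;T⁻¹]).coeff m = if j = m then a else 0 := by
      intro a j m
      rw [← single_eq_C_mul_T]
      exact Finsupp.single_apply
    have hG : g = f - C b * T n - C (((c:R)^k) * b) * T (-n) := by
      rw [hg, hs, hkn, map_mul]
      ring
    have hsupp : g.coeff.support ⊆ f.coeff.support.erase n := by
      intro m hm
      rw [Finsupp.mem_support_iff] at hm
      have hgm : g.coeff m = f.coeff m - (C b * T n : R[T;T⁻¹]).coeff m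
          - (C (((c:R)^k) * b) * T (-n) : R[T;T⁻¹]).coeff m := by
        rw [hG]; rfl
      rw [capp, capp] at hgm
      by_cases h1 : n = m
      · exfalso
        have hnn : ¬ (-n = m) := by omega
        rw [if_pos h1, if_neg hnn, sub_zero] at hgm
        exact hm (by rw [hgm, hb, h1, sub_self])
      by_cases h2 : -n = m
      · exfalso
        have hfm : f.coeff m = ((c:R)^k) * b := by
          rw [← h2]
          have hkey := stmt11_key c σ hσ f hf n
          rw [← hkn, zpow_natCast] at hkey
          rw [← hkn, hkey, hkn, ← hb, Units.val_pow_eq_pow_val]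
        rw [if_neg h1, if_pos h2, sub_zero, hfm, sub_self] at hgm
        exact hm hgm
      · rw [if_neg h1, if_neg h2, sub_zero, sub_zero] at hgm
        rw [Finset.mem_erase, Finsupp.mem_support_iff, ← hgm]
        exact ⟨fun h => h1 h.symm, hm⟩
    have hcard' : g.coeff.support.card ≤ N := by
      have := Finset.card_le_card hsupp
      have h2 : (f.coeff.support.erase n).card = f.coeff.support.card - 1 :=
        Finset.card_erase_of_mem hmem
      omega
    have hgmem := ih g hσg hcard'
    have : f = g + C b * s := by rw [hg]; ring
    rw [this]
    exact add_mem hgmem (mul_mem (by rw [C_eq_algebraMap]; exact Subalgebra.algebraMap_mem _ _)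
      (stmt11_s_mem c k))

end Stmt11Aux

/-- A Laurent polynomial invariant under the substitution `T ↦ c·T⁻¹` (for a
unit `c`) lies in the subalgebra generated by `T + c·T⁻¹`. -/
theorem stmt_11 (R : Type*) [CommRing R] (c : Rˣ)
    (σ : R[T;T⁻¹] →ₐ[R] R[T;T⁻¹]) (hσ : σ (T 1) = C (c : R) * T (-1))
    (f : R[T;T⁻¹]) (hf : σ f = f) :
    f ∈ Algebra.adjoin R {(T 1 + C (c : R) * T (-1) : R[T;T⁻¹])} := by
  exact stmt11_main c σ hσ (f.coeff.support.card) f hf le_rfl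
end

section
/- Let N be a positive integer and let χ be a Dirichlet character modulo N with values in ℂ. Let d be the order of χ, i.e., the order of χ as an element of the group of Dirichlet characters modulo N. Then for every ζ ∈ ℂ with ζ^d = 1, the set of prime numbers p such that χ(p) = ζ is infinite. -/
/-- If `χ` is a Dirichlet character modulo `N` of order `d`, then for every
`d`-th root of unity `ζ ∈ ℂ`, there are infinitely many primes `p` with
`χ(p) = ζ`. -/
theorem stmt_12 (N : ℕ) (hN : 0 < N) (χ : DirichletCharacter ℂ N)
    (ζ : ℂ) (hζ : ζ ^ orderOf χ = 1) :
    {p : ℕ | p.Prime ∧ χ p = ζ}.Infinite := by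
  haveI : NeZero N := ⟨hN.ne'⟩
  set d := orderOf χ with hd
  have hd0 : 0 < d := χ.orderOf_pos
  haveI : NeZero d := ⟨hd0.ne'⟩
  set f := χ.toUnitHom with hf
  haveI : Finite f.range := Set.Finite.to_subtype (Set.finite_range f)
  obtain ⟨g, hg⟩ := IsCyclic.exists_generator (α := f.range)
  obtain ⟨a₀, ha₀⟩ := g.2
  set e := orderOf g with he
  -- `e ∣ d`
  have hgd : g ^ d = 1 := by
    ext
    push_cast
    rw [← ha₀]
    have : ((f a₀ : ℂˣ) : ℂ) = χ a₀ := χ.coe_toUnitHom a₀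
    rw [this, ← χ.pow_apply' hd0.ne', hd, pow_orderOf_eq_one, MulChar.one_apply_coe]
  have hed : e ∣ d := orderOf_dvd_of_pow_eq_one hgd
  -- `d ∣ e`
  have hde : d ∣ e := by
    rw [hd]
    apply orderOf_dvd_of_pow_eq_one
    apply MulChar.ext
    intro a
    have hmem : f a ∈ f.range := ⟨a, rfl⟩
    obtain ⟨k, hk⟩ := hg ⟨f a, hmem⟩
    change g ^ k = _ at hk
    have h1 : (⟨f a, hmem⟩ : f.range) ^ (e : ℤ) = 1 := by
      rw [← hk, ← zpow_mul, mul_comm, zpow_mul, zpow_natCast, he,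
        pow_orderOf_eq_one, one_zpow]
    have h2 : (f a : ℂˣ) ^ e = 1 := by
      have := congrArg (fun x : f.range => ((x : ℂˣ) : ℂ)) h1
      simp only [zpow_natCast] at this ⊢
      push_cast at this
      exact Units.ext (by simpa using this)
    rw [MulChar.pow_apply' _ (Nat.pos_of_dvd_of_pos hed hd0).ne' , MulChar.one_apply_coe]
    have : ((f a : ℂˣ) : ℂ) = χ a := χ.coe_toUnitHom a
    calc χ (a : ZMod N) ^ e = ((f a : ℂˣ) : ℂ) ^ e := by rw [this]
    _ = (((f a : ℂˣ) ^ e : ℂˣ) : ℂ) := by push_cast; ring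
    _ = 1 := by rw [h2]; rfl
  have hed' : e = d := Nat.dvd_antisymm hed hde
  -- `(g : ℂ)` is a primitive `d`-th root of unity
  have hprim : IsPrimitiveRoot (((g : ℂˣ) : ℂ)) d := by
    have : orderOf (((g : ℂˣ) : ℂ)) = d := by
      rw [orderOf_units, Subgroup.orderOf_coe, ← he, hed']
    exact this ▸ IsPrimitiveRoot.orderOf _
  obtain ⟨k, -, hk⟩ := hprim.eq_pow_of_pow_eq_one hζ
  -- the unit `a₀ ^ k` maps to `ζ` under `χ`
  have hχa : χ ((a₀ ^ k : (ZMod N)ˣ) : ZMod N) = ζ := by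
    rw [← hk, ← ha₀]
    push_cast
    rw [χ.coe_toUnitHom a₀, ← map_pow]
  have hinf := Nat.infinite_setOfPred_prime_and_eq_mod (q := N)
    (a := ((a₀ ^ k : (ZMod N)ˣ) : ZMod N)) (a₀ ^ k).isUnit
  refine hinf.mono fun p hp => ⟨hp.1, ?_⟩
  rw [hp.2, hχa]
end

section
/- Let K be a field and let S ∈ K[X, Y] be a polynomial in two variables that is not constant (i.e., not in the image of K). Then, in the polynomial ring K[X₁, Y₁, X₂, Y₂] in four variables, the two elements S(X₁, Y₁) and S(X₂, Y₂) are algebraically independent over K; that is, for every nonzero polynomial P ∈ K[U, V], the element P(S(X₁, Y₁), S(X₂, Y₂)) of K[X₁, Y₁, X₂, Y₂] is nonzero. -/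
open MvPolynomial

/-- Transcendence transfers along an injective algebra homomorphism. -/
theorem my_transcendental_map {R A B : Type*} [CommRing R] [CommRing A] [CommRing B]
    [Algebra R A] [Algebra R B] (g : A →ₐ[R] B) (hg : Function.Injective g)
    {x : A} (hx : Transcendental R x) : Transcendental R (g x) := by
  rw [transcendental_iff] at hx ⊢
  intro p hp
  refine hx p (hg ?_)
  rw [← Polynomial.aeval_algHom_apply, hp, map_zero]

/-- A "bivariate polynomial" (element of `R[X][Y]`) that is not a constant is
transcendental over the domain `R`. -/
theorem my_transcendental_of_not_CC {R : Type*} [CommRing R] [IsDomain R]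
    (F : Polynomial (Polynomial R)) (hF : ∀ c : R, F ≠ Polynomial.C (Polynomial.C c)) :
    Transcendental R F := by
  by_cases h : F.natDegree = 0
  · obtain ⟨a, rfl⟩ : ∃ a, F = Polynomial.C a :=
      ⟨F.coeff 0, Polynomial.eq_C_of_natDegree_eq_zero h⟩
    have hane : a.natDegree ≠ 0 := by
      intro h0
      exact hF (a.coeff 0)
        (congrArg Polynomial.C (Polynomial.eq_C_of_natDegree_eq_zero h0))
    have ha0 : a ≠ 0 := fun h0 => hane (by rw [h0]; simp)
    have hta : Transcendental R a :=
      Polynomial.transcendental a hane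
        (mem_nonZeroDivisors_of_ne_zero (Polynomial.leadingCoeff_ne_zero.mpr ha0))
    have := my_transcendental_map (Polynomial.CAlgHom (R := R) (A := Polynomial R))
      Polynomial.C_injective hta
    simpa using this
  · have hF0 : F ≠ 0 := fun h0 => h (by rw [h0]; simp)
    have : Transcendental (Polynomial R) F :=
      Polynomial.transcendental F h
        (mem_nonZeroDivisors_of_ne_zero (Polynomial.leadingCoeff_ne_zero.mpr hF0))
    exact this.restrictScalars (by
      intro x y hxy
      exact Polynomial.C_injective (by simpa [Polynomial.algebraMap_eq] using hxy))

/-- A non-constant polynomial in two variables over a domain is transcendental over the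
base ring. -/
theorem my_transcendental_of_nonconstant {R : Type*} [CommRing R] [IsDomain R]
    (S : MvPolynomial (Fin 2) R) (hS : ∀ c : R, S ≠ C c) : Transcendental R S := by
  let Φ : MvPolynomial (Fin 2) R ≃ₐ[R] Polynomial (Polynomial R) :=
    (finSuccEquiv R 1).trans (Polynomial.mapAlgEquiv
      ((renameEquiv R (Equiv.equivPUnit.{1,1} (Fin 1))).trans (pUnitAlgEquiv R)))
  have h1 : Transcendental R (Φ S) := by
    refine my_transcendental_of_not_CC _ (fun c hc => hS c ?_)
    apply Φ.injective
    rw [hc]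
    have h2 : (C c : MvPolynomial (Fin 2) R) = algebraMap R _ c := rfl
    rw [h2, Φ.commutes c]
    simp [Polynomial.algebraMap_apply, Polynomial.algebraMap_eq]
  have := my_transcendental_map Φ.symm.toAlgHom Φ.symm.injective h1
  simpa using this

/-- If `x ∈ A` is transcendental over `K` and `y ∈ B` is transcendental over `A`
(where `K → A → B` is a tower), then `y` and the image of `x` in `B` are algebraically
independent over `K`. -/
theorem my_pair_independent {K A B : Type*} [CommRing K] [CommRing A] [CommRing B]
    [Algebra K A] [Algebra A B] [Algebra K B] [IsScalarTower K A B]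
    {x : A} {y : B} (hx : Transcendental K x) (hy : Transcendental A y) :
    AlgebraicIndependent K ![y, algebraMap A B x] := by
  let Θ : MvPolynomial (Fin 2) K →ₐ[K] B :=
    (((Polynomial.aeval y : Polynomial A →ₐ[A] B).restrictScalars K).comp
      (Polynomial.mapAlgHom (aeval ![x] : MvPolynomial (Fin 1) K →ₐ[K] A))).comp
      (finSuccEquiv K 1).toAlgHom
  have hΘ : (aeval ![y, algebraMap A B x] : MvPolynomial (Fin 2) K →ₐ[K] B) = Θ := by
    apply algHom_ext
    intro i
    fin_cases i
    · simp [Θ, finSuccEquiv_X_zero]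
    · have h1 : (X (1 : Fin 2) : MvPolynomial (Fin 2) K) = X (Fin.succ 0) := rfl
      simp [Θ, h1, finSuccEquiv_X_succ]
  have hinj : Function.Injective Θ := by
    have i1 : Function.Injective (finSuccEquiv K 1).toAlgHom :=
      (finSuccEquiv K 1).injective
    have i2 : Function.Injective
        (Polynomial.mapAlgHom (aeval ![x] : MvPolynomial (Fin 1) K →ₐ[K] A)) := by
      have : Function.Injective (aeval ![x] : MvPolynomial (Fin 1) K →ₐ[K] A) :=
        algebraicIndependent_iff_injective_aeval.mp
          (algebraicIndependent_iff_transcendental.mpr (by simpa using hx))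
      exact Polynomial.map_injective _ this
    have i3 : Function.Injective
        ((Polynomial.aeval y : Polynomial A →ₐ[A] B).restrictScalars K) := by
      have : Function.Injective (Polynomial.aeval y : Polynomial A →ₐ[A] B) :=
        transcendental_iff_injective.mp hy
      exact this
    exact ((i3.comp i2).comp i1)
  rw [AlgebraicIndependent]
  rw [hΘ]
  exact hinj


/-- `aeval` at the variables coincides with `map` of the algebra map. -/
theorem my_aeval_X_map {R A : Type*} [CommSemiring R] [CommSemiring A] [Algebra R A]
    {σ : Type*} (p : MvPolynomial σ R) :
    aeval (fun i => (X i : MvPolynomial σ A)) p = map (algebraMap R A) p := by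
  have h : (aeval (fun i => (X i : MvPolynomial σ A)) : MvPolynomial σ R →ₐ[R] MvPolynomial σ A)
      = mapAlgHom (Algebra.ofId R A) := by
    apply algHom_ext
    intro i
    simp [mapAlgHom_apply]
  rw [show (aeval (fun i => (X i : MvPolynomial σ A)) p : MvPolynomial σ A) =
    (aeval (fun i => (X i : MvPolynomial σ A)) : MvPolynomial σ R →ₐ[R] MvPolynomial σ A) p
    from rfl, h]
  rfl

/-- If `S ∈ K[X, Y]` is non-constant, then `S(X₁, Y₁)` and `S(X₂, Y₂)` are
algebraically independent in `K[X₁, Y₁, X₂, Y₂]`: for every nonzero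
`P ∈ K[U, V]`, the element `P(S(X₁,Y₁), S(X₂,Y₂))` is nonzero. -/
theorem stmt_13 (K : Type*) [Field K] (S : MvPolynomial (Fin 2) K)
    (hS : ∀ c : K, S ≠ C c) :
    AlgebraicIndependent K
      ![(aeval ![(X 0 : MvPolynomial (Fin 4) K), X 1]) S,
        (aeval ![(X 2 : MvPolynomial (Fin 4) K), X 3]) S] ∧
      ∀ P : MvPolynomial (Fin 2) K, P ≠ 0 →
        (aeval ![(aeval ![(X 0 : MvPolynomial (Fin 4) K), X 1]) S,
                 (aeval ![(X 2 : MvPolynomial (Fin 4) K), X 3]) S]) P ≠ 0 := by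
  classical
  -- the image of S in B := K[X,Y][X',Y'] with "outer" variables
  set t : MvPolynomial (Fin 2) (MvPolynomial (Fin 2) K) :=
    aeval ![(X 0 : MvPolynomial (Fin 2) (MvPolynomial (Fin 2) K)), X 1] S with ht
  have htmap : t = MvPolynomial.map (algebraMap K (MvPolynomial (Fin 2) K)) S := by
    have hx : ![(X 0 : MvPolynomial (Fin 2) (MvPolynomial (Fin 2) K)), X 1] =
        (fun i : Fin 2 => (X i : MvPolynomial (Fin 2) (MvPolynomial (Fin 2) K))) := by
      funext j
      fin_cases j <;> rfl
    rw [ht, hx, my_aeval_X_map]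
  -- transcendence of S over K
  have hSx : Transcendental K S := my_transcendental_of_nonconstant S hS
  -- t is non-constant over A
  have htnc : ∀ c : MvPolynomial (Fin 2) K, t ≠ C c := by
    intro c hc
    apply hS (S.coeff 0)
    ext d
    rw [coeff_C]
    split_ifs with hd
    · rw [← hd]
    · have h1 : (MvPolynomial.map (algebraMap K (MvPolynomial (Fin 2) K)) S).coeff d = 0 := by
        rw [← htmap, hc, coeff_C, if_neg hd]
      rw [coeff_map] at h1
      have hci : Function.Injective (algebraMap K (MvPolynomial (Fin 2) K)) := fun u v huv => by
        have := congrArg (MvPolynomial.coeff 0)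
          (show (C u : MvPolynomial (Fin 2) K) = C v from huv)
        simpa using this
      exact hci (by simpa using h1)
  have hty : Transcendental (MvPolynomial (Fin 2) K) t := my_transcendental_of_nonconstant t htnc
  -- pair independence in B
  have hcore : AlgebraicIndependent K
      ![t, algebraMap (MvPolynomial (Fin 2) K) (MvPolynomial (Fin 2) (MvPolynomial (Fin 2) K)) S] :=
    my_pair_independent hSx hty
  -- transfer back via the algebra hom f : K[4 vars] → B
  set f : MvPolynomial (Fin 4) K →ₐ[K] MvPolynomial (Fin 2) (MvPolynomial (Fin 2) K) :=
    aeval ![(X 0 : MvPolynomial (Fin 2) (MvPolynomial (Fin 2) K)), X 1, C (X 0), C (X 1)] with hf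
  have hmain : AlgebraicIndependent K
      ![(aeval ![(X 0 : MvPolynomial (Fin 4) K), X 1]) S,
        (aeval ![(X 2 : MvPolynomial (Fin 4) K), X 3]) S] := by
    apply AlgebraicIndependent.of_comp f
    have hcomp : f ∘ ![(aeval ![(X 0 : MvPolynomial (Fin 4) K), X 1]) S,
        (aeval ![(X 2 : MvPolynomial (Fin 4) K), X 3]) S] =
        ![t, algebraMap (MvPolynomial (Fin 2) K)
            (MvPolynomial (Fin 2) (MvPolynomial (Fin 2) K)) S] := by
      funext i
      fin_cases i
      · show f ((aeval ![(X 0 : MvPolynomial (Fin 4) K), X 1]) S) = t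
        rw [comp_aeval_apply, ht]
        have he : (fun i => f (![(X 0 : MvPolynomial (Fin 4) K), X 1] i)) =
            ![(X 0 : MvPolynomial (Fin 2) (MvPolynomial (Fin 2) K)), X 1] := by
          funext j
          fin_cases j <;> simp [f]
        rw [he]
      · show f ((aeval ![(X 2 : MvPolynomial (Fin 4) K), X 3]) S) =
          algebraMap (MvPolynomial (Fin 2) K) (MvPolynomial (Fin 2) (MvPolynomial (Fin 2) K)) S
        rw [comp_aeval_apply]
        have he : (fun i => f (![(X 2 : MvPolynomial (Fin 4) K), X 3] i)) =
            (fun i => C (X i : MvPolynomial (Fin 2) K)) := by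
          funext j
          fin_cases j <;> simp [f]
        rw [he]
        have h2 : (aeval (fun i => C (X i : MvPolynomial (Fin 2) K)) :
            MvPolynomial (Fin 2) K →ₐ[K] MvPolynomial (Fin 2) (MvPolynomial (Fin 2) K)) =
            (IsScalarTower.toAlgHom K (MvPolynomial (Fin 2) K)
              (MvPolynomial (Fin 2) (MvPolynomial (Fin 2) K))).comp (aeval X) := by
          apply algHom_ext
          intro i
          simp [algebraMap_eq]
        rw [show (aeval (fun i => C (X i : MvPolynomial (Fin 2) K)) S :
            MvPolynomial (Fin 2) (MvPolynomial (Fin 2) K)) =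
          ((aeval (fun i => C (X i : MvPolynomial (Fin 2) K)) :
            MvPolynomial (Fin 2) K →ₐ[K] MvPolynomial (Fin 2) (MvPolynomial (Fin 2) K))) S
          from rfl, h2]
        simp [aeval_X_left_apply]
    rw [hcomp]
    exact hcore
  refine ⟨hmain, fun P hP h0 => hP ?_⟩
  have hinj := algebraicIndependent_iff_injective_aeval.mp hmain
  exact hinj (by rw [h0, map_zero])
end
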